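/- Let G be a matching covered graph with a tight cut ∂(X), and let G₁ and G₂ be the two tight cut contractions corresponding to ∂(X). If G is cycle-conformal, then both G₁ and G₂ are cycle-conformal. -/

import Mathlib

open SimpleGraph

/-- A graph has a perfect matching. -/
def hasPM {V : Type*} (G : SimpleGraph V) : Prop :=
  ∃ M : G.Subgraph, M.IsPerfectMatching

/-- The graph obtained from `G` by deleting the vertices in `s`. -/
def delVerts {V : Type*} (G : SimpleGraph V) (s : Set V) : SimpleGraph ↥(sᶜ) :=
  G.induce sᶜ

/-- A graph is cycle-conformal if it has a perfect matching and deleting the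
vertex set of any even cycle leaves a graph with a perfect matching. -/
def cycleConformal {V : Type*} (G : SimpleGraph V) : Prop :=
  hasPM G ∧ ∀ (v : V) (c : G.Walk v v), c.IsCycle → Even c.length →
    hasPM (delVerts G {x | x ∈ c.support})

/-- A graph is matching covered if it has at least 4 vertices, is connected,
has a perfect matching, and every edge lies in some perfect matching. -/
def matchingCovered {V : Type*} (G : SimpleGraph V) : Prop :=
  4 ≤ Nat.card V ∧ G.Connected ∧ hasPM G ∧
    ∀ e ∈ G.edgeSet, ∃ M : G.Subgraph, M.IsPerfectMatching ∧ e ∈ M.edgeSet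

/-- The edge cut `∂(X)`: edges of `G` with exactly one endpoint in `X`. -/
def cutSet {V : Type*} (G : SimpleGraph V) (X : Set V) : Set (Sym2 V) :=
  {e | ∃ a b : V, e = s(a, b) ∧ G.Adj a b ∧ a ∈ X ∧ b ∉ X}

/-- A cut `∂(X)` is tight if every perfect matching of `G` contains exactly
one of its edges. -/
def tightCut {V : Type*} (G : SimpleGraph V) (X : Set V) : Prop :=
  ∀ M : G.Subgraph, M.IsPerfectMatching →
    ∃! e : Sym2 V, e ∈ M.edgeSet ∧ e ∈ cutSet G X

/-- The tight cut contraction `G[X ↦ c]`: the set `X` is contracted to the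
single new vertex `Sum.inr ()`, loops and parallel edges being removed. -/
def contractSet {V : Type*} (G : SimpleGraph V) (X : Set V) :
    SimpleGraph ({v : V // v ∉ X} ⊕ Unit) :=
  SimpleGraph.fromRel (fun a b =>
    (∃ u w : {v : V // v ∉ X}, a = Sum.inl u ∧ b = Sum.inl w ∧ G.Adj u w) ∨
    (∃ (u : {v : V // v ∉ X}) (x : V), x ∈ X ∧ a = Sum.inl u ∧ b = Sum.inr () ∧
      G.Adj u x))

namespace TCC


variable {V : Type*}

/-- `p` is a pairing (perfect matching as an involution) of `G` on the set `S`. -/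
def IsPairingOn (G : SimpleGraph V) (S : Set V) (p : V → V) : Prop :=
  ∀ v ∈ S, p v ∈ S ∧ p v ≠ v ∧ p (p v) = v ∧ G.Adj v (p v)

/-- The subgraph determined by a pairing. -/
def pairSub (G : SimpleGraph V) (p : V → V) : G.Subgraph where
  verts := Set.univ
  Adj a b := G.Adj a b ∧ (p a = b ∨ p b = a)
  adj_sub h := h.1
  edge_vert _ := Set.mem_univ _
  symm := ⟨fun a b h => ⟨h.1.symm, h.2.symm⟩⟩

lemma pairSub_isPM {G : SimpleGraph V} {p : V → V}
    (h : IsPairingOn G Set.univ p) : (pairSub G p).IsPerfectMatching := by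
  rw [SimpleGraph.Subgraph.isPerfectMatching_iff]
  intro v
  obtain ⟨-, hne, hinv, hadj⟩ := h v (Set.mem_univ v)
  refine ⟨p v, ⟨hadj, Or.inl rfl⟩, ?_⟩
  rintro w ⟨hw, rfl | h'⟩
  · rfl
  · obtain ⟨-, -, hinvw, -⟩ := h w (Set.mem_univ w)
    rw [← h', hinvw]

lemma hasPM_of_pairing {G : SimpleGraph V} {p : V → V}
    (h : IsPairingOn G Set.univ p) : hasPM G :=
  ⟨pairSub G p, pairSub_isPM h⟩

lemma pairing_of_PM {G : SimpleGraph V} {M : G.Subgraph}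
    (hM : M.IsPerfectMatching) :
    ∃ p, IsPairingOn G Set.univ p ∧ ∀ a b, s(a,b) ∈ M.edgeSet → p a = b := by
  rw [SimpleGraph.Subgraph.isPerfectMatching_iff] at hM
  refine ⟨fun v => (hM v).choose, fun v _ => ?_, fun a b hab => ?_⟩
  · have h1 : M.Adj v ((hM v).choose) := (hM v).choose_spec.1
    have hadj : G.Adj v ((hM v).choose) := M.adj_sub h1
    refine ⟨Set.mem_univ _, hadj.ne', ?_, hadj⟩
    show (hM ((hM v).choose)).choose = v
    exact ((hM ((hM v).choose)).choose_spec.2 v h1.symm).symm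
  · rw [SimpleGraph.Subgraph.mem_edgeSet] at hab
    exact ((hM a).choose_spec.2 b hab).symm

lemma pairing_of_hasPM {G : SimpleGraph V} (h : hasPM G) :
    ∃ p, IsPairingOn G Set.univ p := by
  obtain ⟨M, hM⟩ := h
  obtain ⟨p, hp, -⟩ := pairing_of_PM hM
  exact ⟨p, hp⟩

lemma hasPM_delVerts_iff {G : SimpleGraph V} (s : Set V) :
    hasPM (delVerts G s) ↔ ∃ p, IsPairingOn G sᶜ p := by
  constructor
  · rintro h
    obtain ⟨q, hq⟩ := pairing_of_hasPM h
    classical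
    refine ⟨fun v => if h : v ∈ sᶜ then (q ⟨v, h⟩ : ↥(sᶜ)).val else v, ?_⟩
    intro v hv
    obtain ⟨-, hne, hinv, hadj⟩ := hq ⟨v, hv⟩ (Set.mem_univ _)
    have hadj' : G.Adj v ((q ⟨v, hv⟩ : ↥(sᶜ)).val) := by
      simpa [delVerts, SimpleGraph.comap_adj] using hadj
    dsimp only
    rw [dif_pos hv]
    refine ⟨(q ⟨v, hv⟩).2, hadj'.ne', ?_, hadj'⟩
    rw [dif_pos (q ⟨v, hv⟩).2]
    have : (⟨(q ⟨v, hv⟩).val, (q ⟨v, hv⟩).2⟩ : ↥(sᶜ)) = q ⟨v, hv⟩ := rfl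
    rw [this, hinv]
  · rintro ⟨p, hp⟩
    refine hasPM_of_pairing (G := delVerts G s)
      (p := fun v => ⟨p v.val, (hp v.val v.2).1⟩) ?_
    rintro ⟨v, hv⟩ -
    obtain ⟨hmem, hne, hinv, hadj⟩ := hp v hv
    refine ⟨Set.mem_univ _, ?_, ?_, ?_⟩
    · simp [Subtype.ext_iff, hne]
    · simp [Subtype.ext_iff, hinv]
    · simpa [delVerts, SimpleGraph.comap_adj] using hadj

lemma hasPM_iff_pairing {G : SimpleGraph V} :
    hasPM G ↔ ∃ p, IsPairingOn G Set.univ p :=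
  ⟨pairing_of_hasPM, fun ⟨_, hp⟩ => hasPM_of_pairing hp⟩

/-- Tight cut + global pairing gives a unique "cross" vertex. -/
lemma cross_unique {G : SimpleGraph V} {X : Set V} (ht : tightCut G X)
    {p : V → V} (hp : IsPairingOn G Set.univ p) :
    ∃ b, b ∉ X ∧ p b ∈ X ∧ ∀ v, v ∉ X → p v ∈ X → v = b := by
  obtain ⟨e, ⟨heM, heC⟩, huniq⟩ := ht (pairSub G p) (pairSub_isPM hp)
  obtain ⟨a, b, rfl, hadj, haX, hbX⟩ := heC
  have hMadj : (pairSub G p).Adj a b := by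
    rwa [SimpleGraph.Subgraph.mem_edgeSet] at heM
  have hpb : p b = a := by
    rcases hMadj.2 with h | h
    · obtain ⟨-, -, hinv, -⟩ := hp a (Set.mem_univ a)
      rw [← h, hinv]
    · exact h
  refine ⟨b, hbX, by rw [hpb]; exact haX, ?_⟩
  intro v hv hpv
  have hMadj' : (pairSub G p).Adj v (p v) :=
    ⟨(hp v (Set.mem_univ v)).2.2.2, Or.inl rfl⟩
  have he' : s(v, p v) ∈ (pairSub G p).edgeSet := by
    rwa [SimpleGraph.Subgraph.mem_edgeSet]
  have hc' : s(v, p v) ∈ cutSet G X := by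
    refine ⟨p v, v, Sym2.eq_swap, (hp v (Set.mem_univ v)).2.2.2.symm, hpv, hv⟩
  have := huniq _ ⟨he', hc'⟩
  rw [Sym2.eq_iff] at this
  rcases this with ⟨h1, h2⟩ | ⟨h1, h2⟩
  · exact absurd (h1 ▸ haX) hv
  · exact h1.symm ▸ rfl


variable {V : Type*}

/-- Pair up consecutive elements of a list. Acts as identity off the list. -/
def listPair [DecidableEq V] : List V → V → V
  | a :: b :: rest, v => if v = a then b else if v = b then a else listPair rest v
  | _, v => v

lemma listPair_not_mem [DecidableEq V] : ∀ (l : List V) (v : V), v ∉ l → listPair l v = v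
  | [], _, _ => rfl
  | [_], _, _ => rfl
  | a :: b :: rest, v, hv => by
      have hva : v ≠ a := fun h => hv (by simp [h])
      have hvb : v ≠ b := fun h => hv (by simp [h])
      rw [listPair, if_neg hva, if_neg hvb]
      exact listPair_not_mem rest v (fun h => hv (by simp [h]))

lemma listPair_head [DecidableEq V] (a b : V) (rest : List V) :
    listPair (a :: b :: rest) a = b := by simp [listPair]

lemma listPair_second [DecidableEq V] {a b : V} (h : b ≠ a) (rest : List V) :
    listPair (a :: b :: rest) b = a := by simp [listPair, h]

lemma listPair_rest [DecidableEq V] {v a b : V} (hva : v ≠ a) (hvb : v ≠ b)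
    (rest : List V) : listPair (a :: b :: rest) v = listPair rest v := by
  simp [listPair, hva, hvb]

lemma listPair_spec [DecidableEq V] (G : SimpleGraph V) :
    ∀ (l : List V), l.Nodup → Even l.length → l.Chain' G.Adj →
      ∀ v ∈ l, (listPair l v ∈ l ∧ listPair l v ≠ v ∧
        listPair l (listPair l v) = v ∧ G.Adj v (listPair l v))
  | [], _, _, _, v, hv => absurd hv List.not_mem_nil
  | [a], _, he, _, v, hv => by simp at he
  | a :: b :: rest, hnd, he, hch, v, hv => by
      have hab : G.Adj a b := hch.rel_head
      have hch' : rest.Chain' G.Adj := hch.tail.tail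
      have hne : a ≠ b := hab.ne
      have hand := List.nodup_cons.mp hnd
      have hbrest := List.nodup_cons.mp hand.2
      have hanb : a ∉ b :: rest := hand.1
      have harest : a ∉ rest := fun h => hanb (by simp [h])
      have hbrest' : b ∉ rest := hbrest.1
      have hrest_nd : rest.Nodup := hbrest.2
      have he' : Even rest.length := by
        simp only [List.length_cons] at he
        obtain ⟨k, hk⟩ := he
        exact ⟨k - 1, by omega⟩
      rcases List.mem_cons.mp hv with rfl | hv'
      · rw [listPair_head]
        refine ⟨by simp, hne.symm, ?_, hab⟩
        rw [listPair_second hne.symm]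
      · rcases List.mem_cons.mp hv' with rfl | hv''
        · rw [listPair_second hne.symm]
          refine ⟨by simp, hne, ?_, hab.symm⟩
          rw [listPair_head]
        · have hva : v ≠ a := fun h => harest (h ▸ hv'')
          have hvb : v ≠ b := fun h => hbrest' (h ▸ hv'')
          obtain ⟨h1, h2, h3, h4⟩ := listPair_spec G rest hrest_nd he' hch' v hv''
          have hlpa : listPair rest v ≠ a := fun h => harest (h ▸ h1)
          have hlpb : listPair rest v ≠ b := fun h => hbrest' (h ▸ h1)
          rw [listPair_rest hva hvb]
          refine ⟨by simp [h1], h2, ?_, h4⟩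
          rw [listPair_rest hlpa hlpb, h3]


variable {V : Type*}

def buildWalk (G : SimpleGraph V) (a : ℕ → V) (n : ℕ)
    (hadj : ∀ i, i < n → G.Adj (a i) (a (i + 1))) :
    (k : ℕ) → k ≤ n → G.Walk (a k) (a n)
  | k, h =>
    if hk : k = n then
      (SimpleGraph.Walk.nil' (a n)).copy (by rw [hk]) rfl
    else
      SimpleGraph.Walk.cons (hadj k (lt_of_le_of_ne h hk))
        (buildWalk G a n hadj (k + 1) (Nat.succ_le_of_lt (lt_of_le_of_ne h hk)))
  termination_by k => n - k
  decreasing_by omega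

lemma buildWalk_support (G : SimpleGraph V) (a : ℕ → V) (n : ℕ)
    (hadj : ∀ i, i < n → G.Adj (a i) (a (i + 1))) :
    ∀ (k : ℕ) (h : k ≤ n),
      (buildWalk G a n hadj k h).support = (List.range' k (n - k + 1)).map a := by
  suffices H : ∀ m (k : ℕ) (h : k ≤ n), n - k = m →
      (buildWalk G a n hadj k h).support = (List.range' k (n - k + 1)).map a by
    exact fun k h => H (n - k) k h rfl
  intro m
  induction m with
  | zero =>
      intro k h hn
      have hk : k = n := by omega
      subst hk
      rw [buildWalk]
      simp
  | succ m ih =>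
      intro k h hn
      have hk : k ≠ n := by omega
      rw [buildWalk]
      rw [dif_neg hk]
      have h2 : n - (k + 1) = m := by omega
      have := ih (k + 1) (by omega) h2
      rw [SimpleGraph.Walk.support_cons, this]
      have : n - k + 1 = (m + 1) + 1 := by omega
      rw [this, List.range'_succ, List.range'_succ]
      simp [h2, List.range'_succ]

lemma buildWalk_length (G : SimpleGraph V) (a : ℕ → V) (n : ℕ)
    (hadj : ∀ i, i < n → G.Adj (a i) (a (i + 1))) :
    ∀ (k : ℕ) (h : k ≤ n), (buildWalk G a n hadj k h).length = n - k := by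
  intro k h
  have := buildWalk_support G a n hadj k h
  have hlen := congrArg List.length this
  rw [SimpleGraph.Walk.length_support] at hlen
  simpa using hlen

/-- The key alternating-path lemma: an even path from `y` to `x` inside `X`. -/
lemma even_path_in_X {G : SimpleGraph V} [Finite V] {X : Set V}
    {f₁ f₂ : V → V} (h₁ : IsPairingOn G Set.univ f₁) (h₂ : IsPairingOn G Set.univ f₂)
    {x y u w : V} (hx : x ∈ X) (hy : y ∈ X) (hw : w ∉ X)
    (hf₁x : f₁ x = u) (hu : u ∉ X) (hf₂y : f₂ y = w)
    (H₁ : ∀ v ∈ X, v ≠ x → f₁ v ∈ X) (H₂ : ∀ v ∈ X, v ≠ y → f₂ v ∈ X) :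
    ∃ R : G.Walk y x, R.IsPath ∧ Even R.length ∧ ∀ z ∈ R.support, z ∈ X := by
  classical
  by_cases hxy : y = x
  · subst hxy
    exact ⟨SimpleGraph.Walk.nil, by simp [SimpleGraph.Walk.IsPath.nil], by simp, by simp [hy]⟩
  -- the alternating sequence
  set a : ℕ → V := fun n => Nat.rec y (fun k v => if Even k then f₁ v else f₂ v) n with ha
  have a_zero : a 0 = y := rfl
  have a_succ : ∀ n, a (n + 1) = if Even n then f₁ (a n) else f₂ (a n) := fun n => rfl
  have inv₁ : ∀ v, f₁ (f₁ v) = v := fun v => (h₁ v (Set.mem_univ v)).2.2.1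
  have inv₂ : ∀ v, f₂ (f₂ v) = v := fun v => (h₂ v (Set.mem_univ v)).2.2.1
  have ne₁ : ∀ v, f₁ v ≠ v := fun v => (h₁ v (Set.mem_univ v)).2.1
  have ne₂ : ∀ v, f₂ v ≠ v := fun v => (h₂ v (Set.mem_univ v)).2.1
  have adj₁ : ∀ v, G.Adj v (f₁ v) := fun v => (h₁ v (Set.mem_univ v)).2.2.2
  have adj₂ : ∀ v, G.Adj v (f₂ v) := fun v => (h₂ v (Set.mem_univ v)).2.2.2
  -- backward identities
  have back : ∀ n, (Even n → f₁ (a (n + 1)) = a n) ∧ (¬Even n → f₂ (a (n + 1)) = a n) := by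
    intro n
    constructor
    · intro hn; rw [a_succ, if_pos hn, inv₁]
    · intro hn; rw [a_succ, if_neg hn, inv₂]
  -- the big invariant
  have P : ∀ n, (∀ m, 1 ≤ m → m ≤ n → a m ≠ x) →
      (∀ k, k ≤ n → a k ∈ X) ∧ (∀ i j, i < j → j ≤ n → a i ≠ a j) := by
    intro n
    induction n with
    | zero =>
        intro _
        refine ⟨?_, ?_⟩
        · intro k hk
          interval_cases k
          simpa [a_zero] using hy
        · intro i j hij hj
          omega
    | succ n ih =>
        intro Hx
        obtain ⟨hX, hinj⟩ := ih (fun m h1 h2 => Hx m h1 (Nat.le_succ_of_le h2))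
        have hanx : a n ≠ x := by
          rcases Nat.eq_zero_or_pos n with rfl | hn
          · simpa [a_zero] using hxy
          · exact Hx n hn (Nat.le_succ n)
        have hXsucc : a (n + 1) ∈ X := by
          rcases Nat.even_or_odd n with hn | hn
          · rw [a_succ, if_pos hn]
            exact H₁ (a n) (hX n le_rfl) hanx
          · rw [a_succ, if_neg (Nat.not_even_iff_odd.mpr hn)]
            have hn1 : 1 ≤ n := by
              rcases hn with ⟨k, hk⟩; omega
            have hany : a n ≠ y := by
              intro hcon
              exact hinj 0 n hn1 le_rfl (by rw [a_zero, hcon])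
            exact H₂ (a n) (hX n le_rfl) hany
        refine ⟨?_, ?_⟩
        · intro k hk
          rcases Nat.lt_succ_iff_lt_or_eq.mp (Nat.lt_succ_of_le hk) with h | rfl
          · exact hX k (by omega)
          · exact hXsucc
        · intro i j hij hj
          rcases Nat.lt_succ_iff_lt_or_eq.mp (Nat.lt_succ_of_le hj) with h | rfl
          · exact hinj i j hij (by omega)
          · -- j = n + 1 : show a i ≠ a (n+1)
            intro heq   -- heq : a i = a (n + 1)
            have hin : i ≤ n := by omega
            -- case i = n
            rcases eq_or_ne i n with rfl | hine
            · rcases Nat.even_or_odd i with hn | hn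
              · rw [a_succ, if_pos hn] at heq
                exact ne₁ (a i) heq.symm
              · rw [a_succ, if_neg (Nat.not_even_iff_odd.mpr hn)] at heq
                exact ne₂ (a i) heq.symm
            have hilt : i < n := lt_of_le_of_ne hin hine
            -- apply the backward map to heq
            rcases Nat.even_or_odd n with hn | hn
            · -- a n = f₁ (a i)
              have h5 : a n = f₁ (a i) := by
                rw [← (back n).1 hn, heq]
              rcases eq_or_ne i 0 with rfl | hi0
              · -- a n = f₁ y = a 1
                have ha1 : a 1 = f₁ (a 0) := by
                  rw [show (1:ℕ) = 0 + 1 from rfl, a_succ, if_pos (Even.zero)]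
                have h6 : a n = a 1 := by rw [h5, ha1]
                have hn1 : n ≠ 1 := by
                  intro hcon
                  rw [hcon] at hn
                  simp at hn
                have hn0 : n ≠ 0 := by omega
                exact hinj 1 n (by omega) le_rfl h6.symm
              · obtain ⟨i', rfl⟩ : ∃ i', i = i' + 1 := ⟨i - 1, by omega⟩
                rcases Nat.even_or_odd i' with hi' | hi'
                · -- a (i'+1) = f₁ (a i') so f₁ (a i) = a i'
                  have h7 : f₁ (a (i' + 1)) = a i' := (back i').1 hi'
                  have h8 : a n = a i' := by rw [h5, h7]
                  exact hinj i' n (by omega) le_rfl h8.symm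
                · -- Odd i' : a (i+1) = f₁ (a i) since i = i'+1 even
                  have hieven : Even (i' + 1) := by
                    rcases hi' with ⟨k, hk⟩; exact ⟨k + 1, by omega⟩
                  have h7 : a (i' + 1 + 1) = f₁ (a (i' + 1)) := by
                    rw [a_succ, if_pos hieven]
                  have h8 : a n = a (i' + 1 + 1) := by rw [h5, ← h7]
                  have : i' + 1 + 1 ≠ n := by
                    intro hcon
                    rw [← hcon] at hn
                    rcases hn with ⟨k, hk⟩
                    rcases hi' with ⟨k', hk'⟩
                    omega
                  exact hinj (i' + 1 + 1) n (by omega) le_rfl h8.symm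
            · -- odd n : a n = f₂ (a i)
              have hne : ¬Even n := Nat.not_even_iff_odd.mpr hn
              have h5 : a n = f₂ (a i) := by
                rw [← (back n).2 hne, heq]
              rcases eq_or_ne i 0 with rfl | hi0
              · -- a n = f₂ y = w ∉ X
                rw [a_zero, hf₂y] at h5
                exact hw (h5 ▸ hX n le_rfl)
              · obtain ⟨i', rfl⟩ : ∃ i', i = i' + 1 := ⟨i - 1, by omega⟩
                rcases Nat.even_or_odd i' with hi' | hi'
                · -- Even i' : i = i'+1 odd : a (i+1) = f₂ (a i)
                  have hiodd : ¬Even (i' + 1) := by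
                    rcases hi' with ⟨k, hk⟩
                    intro ⟨k', hk'⟩; omega
                  have h7 : a (i' + 1 + 1) = f₂ (a (i' + 1)) := by
                    rw [a_succ, if_neg hiodd]
                  have h8 : a n = a (i' + 1 + 1) := by rw [h5, ← h7]
                  have : i' + 1 + 1 ≠ n := by
                    intro hcon
                    rw [← hcon] at hn
                    rcases hn with ⟨k, hk⟩
                    rcases hi' with ⟨k', hk'⟩
                    omega
                  exact hinj (i' + 1 + 1) n (by omega) le_rfl h8.symm
                · -- Odd i' : a (i'+1) = f₂ (a i') so f₂ (a i) = a i'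
                  have h7 : f₂ (a (i' + 1)) = a i' := (back i').2 (Nat.not_even_iff_odd.mpr hi')
                  have h8 : a n = a i' := by rw [h5, h7]
                  exact hinj i' n (by omega) le_rfl h8.symm
  -- existence of a hit
  have hhit : ∃ n, 1 ≤ n ∧ a n = x := by
    by_contra hcon
    push_neg at hcon
    have Hx : ∀ n, ∀ m, 1 ≤ m → m ≤ n → a m ≠ x := fun n m h1 _ => hcon m h1
    have hinj : Function.Injective a := by
      intro i j hij
      by_contra hne
      rcases Nat.lt_or_ge i j with h | h
      · exact (P j (Hx j)).2 i j h le_rfl hij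
      · have h' : j < i := by omega
        exact (P i (Hx i)).2 j i h' le_rfl hij.symm
    obtain ⟨i, j, hne, hij⟩ := Finite.exists_ne_map_eq_of_infinite a
    exact hne (hinj hij)
  -- minimal hit
  let N := Nat.find hhit
  have hN : 1 ≤ N ∧ a N = x := Nat.find_spec hhit
  have hmin : ∀ m, m < N → ¬(1 ≤ m ∧ a m = x) := fun m hm => Nat.find_min hhit hm
  have HxN : ∀ m, 1 ≤ m → m ≤ N - 1 → a m ≠ x := by
    intro m h1 h2 hcon
    exact hmin m (by omega) ⟨h1, hcon⟩
  obtain ⟨hXN, hinjN⟩ := P (N - 1) HxN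
  -- N is even
  have hNeven : Even N := by
    obtain ⟨N', hN'⟩ : ∃ N', N = N' + 1 := ⟨N - 1, by omega⟩
    rcases Nat.even_or_odd N' with hp | hp
    · exfalso
      have h5 : a (N' + 1) = f₁ (a N') := by rw [a_succ, if_pos hp]
      have h6 : a N' = u := by
        have := hN.2
        rw [hN', h5] at this
        rw [← hf₁x, ← this, inv₁]
      have : a N' ∈ X := by
        have : N' ≤ N - 1 := by omega
        exact hXN N' this
      rw [h6] at this
      exact hu this
    · rw [hN']
      rcases hp with ⟨k, hk⟩
      exact ⟨k + 1, by omega⟩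
  -- adjacency along the sequence
  have hadj : ∀ i, i < N → G.Adj (a i) (a (i + 1)) := by
    intro i _
    rcases Nat.even_or_odd i with hp | hp
    · rw [a_succ, if_pos hp]; exact adj₁ (a i)
    · rw [a_succ, if_neg (Nat.not_even_iff_odd.mpr hp)]; exact adj₂ (a i)
  -- injectivity on [0, N]
  have hinjfull : ∀ i j, i ≤ N → j ≤ N → a i = a j → i = j := by
    intro i j hi hj heq
    by_contra hne
    -- wlog i < j
    rcases Nat.lt_or_ge i j with h | h
    · rcases eq_or_ne j N with rfl | hjN
      · rcases eq_or_ne i 0 with rfl | hi0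
        · rw [a_zero, hN.2] at heq; exact hxy heq
        · exact HxN i (by omega) (by omega) (heq.trans hN.2)
      · exact hinjN i j h (by omega) heq
    · have h' : j < i := by omega
      rcases eq_or_ne i N with rfl | hiN
      · rcases eq_or_ne j 0 with rfl | hj0
        · rw [a_zero, hN.2] at heq; exact hxy heq.symm
        · exact HxN j (by omega) (by omega) (heq.symm.trans hN.2)
      · exact hinjN j i h' (by omega) heq.symm
  -- build the walk
  have hzero : (0 : ℕ) ≤ N := Nat.zero_le N
  let R0 := buildWalk G a N hadj 0 hzero
  have hsup : R0.support = (List.range' 0 (N + 1)).map a := by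
    have := buildWalk_support G a N hadj 0 hzero
    simpa using this
  have hlen : R0.length = N := by
    have := buildWalk_length G a N hadj 0 hzero
    simpa using this
  let R : G.Walk y x := R0.copy a_zero hN.2
  refine ⟨R, ?_, ?_, ?_⟩
  · rw [SimpleGraph.Walk.isPath_def]
    rw [show R.support = R0.support from SimpleGraph.Walk.support_copy R0 a_zero hN.2]
    rw [hsup]
    refine List.Nodup.map_on ?_ (List.nodup_range' (s := 0) (n := N + 1) 1 (by norm_num))
    intro i hi j hj hij
    rw [List.mem_range'_1] at hi hj
    exact hinjfull i j (by omega) (by omega) hij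
  · rw [show R.length = R0.length from SimpleGraph.Walk.length_copy R0 a_zero hN.2]
    rw [hlen]; exact hNeven
  · intro z hz
    have hz' : z ∈ R0.support := by
      rw [show R.support = R0.support from SimpleGraph.Walk.support_copy R0 a_zero hN.2] at hz
      exact hz
    rw [hsup] at hz'
    obtain ⟨i, hi, rfl⟩ := List.mem_map.mp hz'
    rw [List.mem_range'_1] at hi
    rcases eq_or_ne i N with rfl | hiN
    · rw [hN.2]; exact hx
    · exact hXN i (by omega)
def sval {V : Type*} (X : Set V) (v₀ : V) : ({v : V // v ∉ X} ⊕ Unit) → V :=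
  Sum.elim Subtype.val (fun _ => v₀)

@[simp] lemma sval_inl {X : Set V} (v₀ : V) (a : {v : V // v ∉ X}) :
    sval X v₀ (Sum.inl a) = a.val := rfl

lemma contract_adj_inl_inl {G : SimpleGraph V} {X : Set V} {a b : {v : V // v ∉ X}} :
    (contractSet G X).Adj (Sum.inl a) (Sum.inl b) ↔ a ≠ b ∧ G.Adj a.val b.val := by
  rw [contractSet, SimpleGraph.fromRel_adj]
  constructor
  · rintro ⟨hne, h | h⟩
    · rcases h with ⟨u, w, h1, h2, h3⟩ | ⟨u, x, hx, h1, h2, h3⟩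
      · cases h1; cases h2
        exact ⟨fun h => hne (by rw [h]), h3⟩
      · exact absurd h2 (by simp)
    · rcases h with ⟨u, w, h1, h2, h3⟩ | ⟨u, x, hx, h1, h2, h3⟩
      · cases h1; cases h2
        exact ⟨fun h => hne (by rw [h]), h3.symm⟩
      · exact absurd h2 (by simp)
  · rintro ⟨hne, hadj⟩
    exact ⟨by simp [hne], Or.inl (Or.inl ⟨a, b, rfl, rfl, hadj⟩)⟩

lemma contract_adj_inl_inr {G : SimpleGraph V} {X : Set V} {a : {v : V // v ∉ X}} :
    (contractSet G X).Adj (Sum.inl a) (Sum.inr ()) ↔ ∃ x ∈ X, G.Adj a.val x := by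
  rw [contractSet, SimpleGraph.fromRel_adj]
  constructor
  · rintro ⟨hne, h | h⟩ <;>
      rcases h with ⟨u, w, h1, h2, h3⟩ | ⟨u, x, hx, h1, h2, h3⟩
    · simp at h2
    · obtain rfl : a = u := by injection h1
      exact ⟨x, hx, h3⟩
    · simp at h1
    · simp at h1
  · rintro ⟨x, hx, hadj⟩
    exact ⟨by simp, Or.inl (Or.inr ⟨a, x, hx, rfl, rfl, hadj⟩)⟩

lemma contract_adj_inr_inl {G : SimpleGraph V} {X : Set V} {a : {v : V // v ∉ X}} :
    (contractSet G X).Adj (Sum.inr ()) (Sum.inl a) ↔ ∃ x ∈ X, G.Adj a.val x := by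
  rw [SimpleGraph.adj_comm]
  exact contract_adj_inl_inr

lemma eq_inl_of_ne_inr {X : Set V} {z : {v : V // v ∉ X} ⊕ Unit}
    (h : z ≠ Sum.inr ()) : ∃ w, z = Sum.inl w := by
  cases z with
  | inl w => exact ⟨w, rfl⟩
  | inr u => cases u; exact absurd rfl h

lemma lift_walk {G : SimpleGraph V} {X : Set V} (v₀ : V) :
    ∀ {A B : {v : V // v ∉ X} ⊕ Unit} (W : (contractSet G X).Walk A B),
      Sum.inr () ∉ W.support →
      ∀ (a' b' : {v : V // v ∉ X}), A = Sum.inl a' → B = Sum.inl b' →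
      ∃ Wg : G.Walk a'.val b'.val,
        Wg.length = W.length ∧
        Wg.support = W.support.map (sval X v₀) ∧
        Wg.edges = W.edges.map (Sym2.map (sval X v₀)) := by
  intro A B W
  induction W with
  | nil =>
      rename_i u
      intro hni a' b' hA hB
      subst hA
      obtain rfl : a' = b' := by
        injection hB
      exact ⟨SimpleGraph.Walk.nil, by simp, by simp, by simp⟩
  | cons h p ih =>
      rename_i u m B'
      intro hni a' b' hA hB
      subst hA
      have hmni : Sum.inr () ∉ p.support := by
        intro hc
        exact hni (by rw [SimpleGraph.Walk.support_cons]; exact List.mem_cons_of_mem _ hc)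
      have hm : m ∈ p.support := SimpleGraph.Walk.start_mem_support p
      have hmne : m ≠ Sum.inr () := fun hc => hmni (hc ▸ hm)
      obtain ⟨m', rfl⟩ := eq_inl_of_ne_inr hmne
      have hadj : G.Adj a'.val m'.val := (contract_adj_inl_inl.mp h).2
      obtain ⟨Wg', hlen, hsup, hedg⟩ := ih hmni m' b' rfl hB
      refine ⟨SimpleGraph.Walk.cons hadj Wg', ?_, ?_, ?_⟩
      · simp [hlen]
      · simp [hsup]
      · simp [hedg]


variable {V : Type*}

lemma closed_path_nil {G : SimpleGraph V} {v : V} (W : G.Walk v v) (h : W.IsPath) :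
    W.length = 0 := by
  cases W with
  | nil => rfl
  | cons hadj p =>
      exfalso
      rw [SimpleGraph.Walk.isPath_def, SimpleGraph.Walk.support_cons] at h
      exact (List.nodup_cons.mp h).1 (SimpleGraph.Walk.end_mem_support p)

lemma end_mem_tail {G : SimpleGraph V} {a b : V} (W : G.Walk a b) (h : W.length ≠ 0) :
    b ∈ W.support.tail := by
  cases W with
  | nil => simp at h
  | cons hadj p =>
      rw [SimpleGraph.Walk.support_cons, List.tail_cons]
      exact SimpleGraph.Walk.end_mem_support p

lemma mem_support_iff_mem_tail {G : SimpleGraph V} {r : V} (C : G.Walk r r)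
    (h : C.length ≠ 0) (z : V) : z ∈ C.support ↔ z ∈ C.support.tail := by
  constructor
  · intro hz
    rw [SimpleGraph.Walk.support_eq_cons] at hz
    rcases List.mem_cons.mp hz with rfl | hz'
    · exact end_mem_tail C h
    · exact hz'
  · intro hz
    rw [SimpleGraph.Walk.support_eq_cons]
    exact List.mem_cons_of_mem _ hz

lemma rotate_length [DecidableEq V] {G : SimpleGraph V} {u v : V} (c : G.Walk v v)
    (h : u ∈ c.support) : (c.rotate u h).length = c.length := by
  have hs := congrArg SimpleGraph.Walk.length (c.take_spec h)
  rw [SimpleGraph.Walk.length_append] at hs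
  have : c.rotate u h = (c.dropUntil u h).append (c.takeUntil u h) := rfl
  rw [this, SimpleGraph.Walk.length_append]
  omega

lemma closed_decomp {G : SimpleGraph V} {r : V} (C : G.Walk r r) (hc : C.IsCycle) :
    ∃ (s t : V) (hs : G.Adj r s) (q : G.Walk s t) (ht : G.Adj t r),
      q.IsPath ∧ r ∉ q.support ∧ q.length + 2 = C.length ∧
      (∀ z, z ∈ C.support ↔ z = r ∨ z ∈ q.support) := by
  cases C with
  | nil =>
      exfalso
      have := hc.three_le_length
      simp at this
  | cons h W =>
      rename_i s
      cases W with
      | nil => exact absurd rfl h.ne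
      | cons h₂ W₂ =>
          obtain ⟨t, q, h', heq⟩ := SimpleGraph.Walk.exists_cons_eq_concat h₂ W₂
          rw [heq] at hc ⊢
          have hiff := (SimpleGraph.Walk.cons_isCycle_iff _ h).mp hc
          have hpath : (q.concat h').IsPath := hiff.1
          have hsup : (q.concat h').support = q.support ++ [r] := by
            rw [SimpleGraph.Walk.concat_eq_append, SimpleGraph.Walk.support_append]
            simp
          rw [SimpleGraph.Walk.isPath_def, hsup] at hpath
          have hnd := List.nodup_append'.mp hpath
          refine ⟨s, t, h, q, h', ?_, ?_, ?_, ?_⟩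
          · rw [SimpleGraph.Walk.isPath_def]; exact hnd.1
          · intro hr
            exact (hnd.2.2 hr) (by simp)
          · rw [SimpleGraph.Walk.length_cons, SimpleGraph.Walk.length_concat]
          · intro z
            rw [SimpleGraph.Walk.support_cons, hsup]
            constructor
            · intro hz
              rcases List.mem_cons.mp hz with rfl | hz'
              · exact Or.inl rfl
              · rcases List.mem_append.mp hz' with h1 | h1
                · exact Or.inr h1
                · exact Or.inl (by simpa using h1)
            · rintro (rfl | hz')
              · exact List.mem_cons_self
              · exact List.mem_cons_of_mem _ (List.mem_append_left _ hz')


lemma contract_hasPM {G : SimpleGraph V} {X : Set V} (ht : tightCut G X)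
    (hPM : hasPM G) : hasPM (contractSet G X) := by
  classical
  obtain ⟨p, hp⟩ := pairing_of_hasPM hPM
  obtain ⟨b, hbX, hpbX, huniq⟩ := cross_unique ht hp
  have hpinv : ∀ v, p (p v) = v := fun v => (hp v (Set.mem_univ v)).2.2.1
  have hpne : ∀ v, p v ≠ v := fun v => (hp v (Set.mem_univ v)).2.1
  have hpadj : ∀ v, G.Adj v (p v) := fun v => (hp v (Set.mem_univ v)).2.2.2
  have hkey : ∀ (v : {v : V // v ∉ X}), v.val ≠ b → p v.val ∉ X :=
    fun v hv hmem => hv (huniq v.val v.2 hmem)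
  refine hasPM_of_pairing (G := contractSet G X)
    (p := fun z => match z with
      | Sum.inr _ => Sum.inl ⟨b, hbX⟩
      | Sum.inl v => if hv : v.val = b then Sum.inr ()
          else Sum.inl ⟨p v.val, hkey v hv⟩) ?_
  rintro (v | u) -
  · by_cases hv : v.val = b
    · refine ⟨Set.mem_univ _, ?_, ?_, ?_⟩
      · simp [hv]
      · simp only [hv, dif_pos]
        exact congrArg Sum.inl (Subtype.ext hv.symm)
      · simp only [hv, dif_pos]
        rw [contract_adj_inl_inr]
        exact ⟨p b, hpbX, hv ▸ hpadj b⟩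
    · refine ⟨Set.mem_univ _, ?_, ?_, ?_⟩
      · simp only [dif_neg hv]
        intro hcon
        injection hcon with hcon'
        exact hpne v.val (congrArg Subtype.val hcon')
      · simp only [dif_neg hv]
        have hne2 : p v.val ≠ b := by
          intro hcon
          exact v.2 (by rw [← hpinv v.val, hcon]; exact hpbX)
        simp only [dif_neg hne2]
        exact congrArg Sum.inl (Subtype.ext (hpinv v.val))
      · simp only [dif_neg hv]
        rw [contract_adj_inl_inl]
        refine ⟨?_, hpadj v.val⟩
        intro hcon
        exact hpne v.val (congrArg Subtype.val hcon).symm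
  · refine ⟨Set.mem_univ _, by simp, ?_, ?_⟩
    · cases u
      simp
    · rw [contract_adj_inr_inl]
      exact ⟨p b, hpbX, hpadj b⟩

lemma sym2_sval_inj {X : Set V} (vj : V) {e1 e2 : Sym2 ({v : V // v ∉ X} ⊕ Unit)}
    (h1 : ∀ z ∈ e1, z ≠ Sum.inr ()) (h2 : ∀ z ∈ e2, z ≠ Sum.inr ())
    (heq : Sym2.map (sval X vj) e1 = Sym2.map (sval X vj) e2) : e1 = e2 := by
  induction e1 using Sym2.ind with
  | _ a1 b1 =>
    induction e2 using Sym2.ind with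
    | _ a2 b2 =>
      obtain ⟨a1', rfl⟩ := eq_inl_of_ne_inr (h1 _ (Sym2.mem_mk_left _ _))
      obtain ⟨b1', rfl⟩ := eq_inl_of_ne_inr (h1 _ (Sym2.mem_mk_right _ _))
      obtain ⟨a2', rfl⟩ := eq_inl_of_ne_inr (h2 _ (Sym2.mem_mk_left _ _))
      obtain ⟨b2', rfl⟩ := eq_inl_of_ne_inr (h2 _ (Sym2.mem_mk_right _ _))
      simp only [Sym2.map_pair_eq, sval_inl, Sym2.eq_iff] at heq ⊢
      rcases heq with ⟨ha, hb⟩ | ⟨ha, hb⟩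
      · exact Or.inl ⟨by rw [Subtype.ext ha], by rw [Subtype.ext hb]⟩
      · exact Or.inr ⟨by rw [Subtype.ext ha], by rw [Subtype.ext hb]⟩

lemma contract_cc_case1 {G : SimpleGraph V} {X : Set V} (ht : tightCut G X)
    (hcc : cycleConformal G) (vj : V) (v₀' : {v : V // v ∉ X})
    (c : (contractSet G X).Walk (Sum.inl v₀') (Sum.inl v₀'))
    (hcyc : c.IsCycle) (heven : Even c.length) (hinr : Sum.inr () ∉ c.support) :
    hasPM (delVerts (contractSet G X) {z | z ∈ c.support}) := by
  classical
  obtain ⟨C, hClen, hCsup, hCedg⟩ := lift_walk vj c hinr v₀' v₀' rfl rfl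
  obtain ⟨htrail, hnnil, htail⟩ := (SimpleGraph.Walk.isCycle_def c).mp hcyc
  have hsub : ∀ z' ∈ c.support, z' ≠ Sum.inr () := fun z' hz' hcon => hinr (hcon ▸ hz')
  have h3 : 3 ≤ c.length := hcyc.three_le_length
  -- C is a cycle
  have hCcyc : C.IsCycle := by
    rw [SimpleGraph.Walk.isCycle_def]
    refine ⟨?_, ?_, ?_⟩
    · rw [SimpleGraph.Walk.isTrail_def, hCedg]
      refine List.Nodup.map_on ?_ (SimpleGraph.Walk.isTrail_def c |>.mp htrail)
      intro e1 he1 e2 he2 heq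
      refine sym2_sval_inj vj ?_ ?_ heq
      · intro z hz
        refine hsub z ?_
        induction e1 using Sym2.ind with
        | _ x1 y1 =>
          rcases Sym2.mem_iff.mp hz with rfl | rfl
          · exact SimpleGraph.Walk.fst_mem_support_of_mem_edges c he1
          · exact SimpleGraph.Walk.snd_mem_support_of_mem_edges c he1
      · intro z hz
        refine hsub z ?_
        induction e2 using Sym2.ind with
        | _ x2 y2 =>
          rcases Sym2.mem_iff.mp hz with rfl | rfl
          · exact SimpleGraph.Walk.fst_mem_support_of_mem_edges c he2
          · exact SimpleGraph.Walk.snd_mem_support_of_mem_edges c he2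
    · intro hnil
      have : C.length = 0 := by rw [hnil]; rfl
      omega
    · have : C.support.tail = c.support.tail.map (sval X vj) := by
        rw [hCsup]
        cases hs : c.support with
        | nil => exact absurd hs (SimpleGraph.Walk.support_ne_nil c)
        | cons hd tl => simp
      rw [this]
      refine List.Nodup.map_on ?_ htail
      intro z1 hz1 z2 hz2 hzeq
      have hz1' := hsub z1 (List.mem_of_mem_tail hz1)
      have hz2' := hsub z2 (List.mem_of_mem_tail hz2)
      obtain ⟨w1, rfl⟩ := eq_inl_of_ne_inr hz1'
      obtain ⟨w2, rfl⟩ := eq_inl_of_ne_inr hz2'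
      simp only [sval_inl] at hzeq
      rw [Subtype.ext hzeq]
  have hCeven : Even C.length := by rw [hClen]; exact heven
  have hPMdel := hcc.2 v₀'.val C hCcyc hCeven
  obtain ⟨q, hq⟩ := (hasPM_delVerts_iff _).mp hPMdel
  set S₁ : Set V := {z : V | z ∈ C.support} with hS₁
  have hS₁X : ∀ z ∈ S₁, z ∉ X := by
    intro z hz
    rw [hS₁, Set.mem_setOf_eq, hCsup] at hz
    obtain ⟨z', hz', rfl⟩ := List.mem_map.mp hz
    obtain ⟨w, rfl⟩ := eq_inl_of_ne_inr (hsub z' hz')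
    exact w.2
  -- the pairing on the cycle support
  set L : List V := C.support.tail with hL
  have hLnd : L.Nodup := ((SimpleGraph.Walk.isCycle_def C).mp hCcyc).2.2
  have hLeven : Even L.length := by
    rw [hL]
    have : C.support.length = C.length + 1 := SimpleGraph.Walk.length_support C
    have h' : C.support.tail.length = C.length := by
      rw [List.length_tail, this]
      omega
    rw [h']
    exact hCeven
  have hLch : L.Chain' G.Adj := (SimpleGraph.Walk.isChain_adj_support C).tail
  have hLmem : ∀ z, z ∈ S₁ ↔ z ∈ L := by
    intro z
    rw [hS₁, Set.mem_setOf_eq, hL]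
    exact mem_support_iff_mem_tail C (by omega) z
  have hp₁ := listPair_spec G L hLnd hLeven hLch
  -- combined pairing
  set F : V → V := fun z => if z ∈ S₁ then listPair L z else q z with hF
  have hFeq : ∀ z, z ∈ S₁ → F z = listPair L z := fun z hz => by rw [hF]; simp [hz]
  have hFeq' : ∀ z, z ∉ S₁ → F z = q z := fun z hz => by rw [hF]; simp [hz]
  have hFpair : IsPairingOn G Set.univ F := by
    rintro v -
    by_cases hv : v ∈ S₁
    · obtain ⟨hm, hne, hinv, hadj⟩ := hp₁ v ((hLmem v).mp hv)
      have hmS : listPair L v ∈ S₁ := (hLmem _).mpr hm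
      refine ⟨Set.mem_univ _, ?_, ?_, ?_⟩
      · rw [hFeq v hv]; exact hne
      · rw [hFeq v hv, hFeq _ hmS, hinv]
      · rw [hFeq v hv]; exact hadj
    · obtain ⟨hm, hne, hinv, hadj⟩ := hq v hv
      refine ⟨Set.mem_univ _, ?_, ?_, ?_⟩
      · rw [hFeq' v hv]; exact hne
      · rw [hFeq' v hv, hFeq' _ hm, hinv]
      · rw [hFeq' v hv]; exact hadj
  obtain ⟨b, hbX, hFbX, hFuniq⟩ := cross_unique ht hFpair
  have hbS : b ∉ S₁ := by
    intro hbS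
    rw [hFeq b hbS] at hFbX
    exact hS₁X _ ((hLmem _).mpr (hp₁ b ((hLmem b).mp hbS)).1) hFbX
  have hFqb : F b = q b := hFeq' b hbS
  have hqbX : q b ∈ X := by rw [← hFqb]; exact hFbX
  obtain ⟨hqbS, hqbne, hqbinv, hqbadj⟩ := hq b hbS
  have hquniq : ∀ z, z ∉ S₁ → z ∉ X → q z ∈ X → z = b := by
    intro z h1 h2 h3
    refine hFuniq z h2 ?_
    rwa [hFeq' z h1]
  have hmemiff : ∀ (w : {v : V // v ∉ X}),
      (Sum.inl w : {v : V // v ∉ X} ⊕ Unit) ∈ c.support ↔ w.val ∈ S₁ := by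
    intro w
    rw [hS₁, Set.mem_setOf_eq, hCsup]
    constructor
    · intro h
      exact List.mem_map.mpr ⟨Sum.inl w, h, rfl⟩
    · intro h
      obtain ⟨z', hz', heq⟩ := List.mem_map.mp h
      obtain ⟨w', rfl⟩ := eq_inl_of_ne_inr (hsub z' hz')
      simp only [sval_inl] at heq
      rwa [← Subtype.ext heq]
  refine (hasPM_delVerts_iff _).mpr
    ⟨fun z => match z with
      | Sum.inr _ => Sum.inl ⟨b, hbX⟩
      | Sum.inl w => if hw : w.val = b then Sum.inr ()
          else if h2 : q w.val ∉ X then Sum.inl ⟨q w.val, h2⟩ else z, ?_⟩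
  rintro (w | u) hz
  · -- z = inl w
    have hwS : w.val ∉ S₁ := fun hc => hz ((hmemiff w).mpr hc)
    by_cases hw : w.val = b
    · simp only [dif_pos hw]
      refine ⟨?_, by simp, ?_, ?_⟩
      · exact fun hc => hinr hc
      · exact congrArg Sum.inl (Subtype.ext hw.symm)
      · rw [contract_adj_inl_inr]
        exact ⟨q b, hqbX, hw ▸ hqbadj⟩
    · obtain ⟨hqwS, hqwne, hqwinv, hqwadj⟩ := hq w.val hwS
      have hqwX : q w.val ∉ X := by
        intro hc
        exact hw (hquniq w.val hwS w.2 hc)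
      simp only [dif_neg hw, dif_pos hqwX]
      refine ⟨?_, ?_, ?_, ?_⟩
      · intro hc
        exact hqwS ((hmemiff ⟨q w.val, hqwX⟩).mp hc)
      · intro hc
        injection hc with hc'
        exact hqwne (congrArg Subtype.val hc')
      · have hqwb : q w.val ≠ b := by
          intro hc
          have : w.val = q b := by rw [← hqwinv, hc]
          exact w.2 (this ▸ hqbX)
        simp only [dif_neg hqwb]
        have : q (q w.val) ∉ X := by rw [hqwinv]; exact w.2
        simp only [dif_pos this]
        exact congrArg Sum.inl (Subtype.ext hqwinv)
      · rw [contract_adj_inl_inl]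
        refine ⟨?_, hqwadj⟩
        intro hc
        exact hqwne (congrArg Subtype.val hc).symm
  · -- z = inr u
    cases u
    refine ⟨?_, by simp, ?_, ?_⟩
    · exact fun hc => hbS ((hmemiff ⟨b, hbX⟩).mp hc)
    · simp
    · rw [contract_adj_inr_inl]
      exact ⟨q b, hqbX, hqbadj⟩

lemma contract_cc_case2 [Finite V] {G : SimpleGraph V} {X : Set V}
    (hmc : matchingCovered G) (ht : tightCut G X) (hcc : cycleConformal G) (vj : V)
    (c : (contractSet G X).Walk (Sum.inr ()) (Sum.inr ()))
    (hcyc : c.IsCycle) (heven : Even c.length) :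
    hasPM (delVerts (contractSet G X) {z | z ∈ c.support}) := by
  classical
  obtain ⟨s, t, hs, q, ht', hqpath, hrq, hqlen, hsupiff⟩ := closed_decomp c hcyc
  obtain ⟨u', rfl⟩ := eq_inl_of_ne_inr (Ne.symm hs.ne)
  obtain ⟨w', rfl⟩ := eq_inl_of_ne_inr ht'.ne
  obtain ⟨x, hxX, hux⟩ := contract_adj_inr_inl.mp hs
  obtain ⟨y, hyX, hwy⟩ := contract_adj_inl_inr.mp ht'
  have h3 : 3 ≤ c.length := hcyc.three_le_length
  have h4 : 4 ≤ c.length := by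
    rcases heven with ⟨k, hk⟩; omega
  have hqlen2 : 2 ≤ q.length := by omega
  have huw : u' ≠ w' := by
    intro hcon
    subst hcon
    have := closed_path_nil q hqpath
    omega
  have huwval : u'.val ≠ w'.val := fun h => huw (Subtype.ext h)
  -- perfect matchings through the two cut edges
  have he₁ : s(u'.val, x) ∈ G.edgeSet := hux
  obtain ⟨M₁, hM₁, hM₁e⟩ := hmc.2.2.2 _ he₁
  obtain ⟨f₁, hf₁, hf₁e⟩ := pairing_of_PM hM₁
  have hf₁u : f₁ u'.val = x := hf₁e _ _ hM₁e
  have hf₁x : f₁ x = u'.val := by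
    rw [← hf₁u, (hf₁ u'.val (Set.mem_univ _)).2.2.1]
  have he₂ : s(w'.val, y) ∈ G.edgeSet := hwy
  obtain ⟨M₂, hM₂, hM₂e⟩ := hmc.2.2.2 _ he₂
  obtain ⟨f₂, hf₂, hf₂e⟩ := pairing_of_PM hM₂
  have hf₂w : f₂ w'.val = y := hf₂e _ _ hM₂e
  have hf₂y : f₂ y = w'.val := by
    rw [← hf₂w, (hf₂ w'.val (Set.mem_univ _)).2.2.1]
  -- cross uniqueness
  obtain ⟨b₁, hb₁X, hf₁b₁X, huniq₁⟩ := cross_unique ht hf₁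
  have hb₁ : b₁ = u'.val := (huniq₁ u'.val u'.2 (by rw [hf₁u]; exact hxX)).symm
  have H₁ : ∀ v ∈ X, v ≠ x → f₁ v ∈ X := by
    intro v hv hvx
    by_contra hcon
    have h5 : f₁ v = b₁ := huniq₁ (f₁ v) hcon
      (by rw [(hf₁ v (Set.mem_univ _)).2.2.1]; exact hv)
    rw [hb₁] at h5
    have h6 : v = f₁ u'.val := by rw [← h5, (hf₁ v (Set.mem_univ _)).2.2.1]
    rw [hf₁u] at h6
    exact hvx h6
  obtain ⟨b₂, hb₂X, hf₂b₂X, huniq₂⟩ := cross_unique ht hf₂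
  have hb₂ : b₂ = w'.val := (huniq₂ w'.val w'.2 (by rw [hf₂w]; exact hyX)).symm
  have H₂ : ∀ v ∈ X, v ≠ y → f₂ v ∈ X := by
    intro v hv hvy
    by_contra hcon
    have h5 : f₂ v = b₂ := huniq₂ (f₂ v) hcon
      (by rw [(hf₂ v (Set.mem_univ _)).2.2.1]; exact hv)
    rw [hb₂] at h5
    have h6 : v = f₂ w'.val := by rw [← h5, (hf₂ v (Set.mem_univ _)).2.2.1]
    rw [hf₂w] at h6
    exact hvy h6
  -- even path inside X
  obtain ⟨R, hRpath, hReven, hRX⟩ :=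
    even_path_in_X hf₁ hf₂ hxX hyX w'.2 hf₁x u'.2 hf₂y H₁ H₂
  -- lift q
  obtain ⟨P, hPlen, hPsup, hPedg⟩ := lift_walk vj q hrq u' w' rfl rfl
  have hqsub : ∀ z' ∈ q.support, z' ≠ Sum.inr () := fun z' hz' hcon => hrq (hcon ▸ hz')
  have hPpath : P.IsPath := by
    rw [SimpleGraph.Walk.isPath_def, hPsup]
    refine List.Nodup.map_on ?_ ((SimpleGraph.Walk.isPath_def q).mp hqpath)
    intro z1 hz1 z2 hz2 hzeq
    obtain ⟨w1, rfl⟩ := eq_inl_of_ne_inr (hqsub z1 hz1)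
    obtain ⟨w2, rfl⟩ := eq_inl_of_ne_inr (hqsub z2 hz2)
    simp only [sval_inl] at hzeq
    rw [Subtype.ext hzeq]
  have hPX : ∀ z ∈ P.support, z ∉ X := by
    intro z hz
    rw [hPsup] at hz
    obtain ⟨z', hz', rfl⟩ := List.mem_map.mp hz
    obtain ⟨w1, rfl⟩ := eq_inl_of_ne_inr (hqsub z' hz')
    exact w1.2
  have hPeven : Even P.length := by
    rw [hPlen]
    rcases heven with ⟨k, hk⟩
    exact ⟨k - 1, by omega⟩
  have hRsubX : ∀ z ∈ R.support, z ∈ X := hRX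
  -- construct the cycle C2 in G
  set Tw : G.Walk u'.val x := P.append (SimpleGraph.Walk.cons hwy R) with hTw
  have hTwsup : Tw.support = P.support ++ R.support := by
    rw [hTw, SimpleGraph.Walk.support_append, SimpleGraph.Walk.support_cons, List.tail_cons]
  have hTwpath : Tw.IsPath := by
    rw [SimpleGraph.Walk.isPath_def, hTwsup]
    refine List.Nodup.append ((SimpleGraph.Walk.isPath_def P).mp hPpath)
      ((SimpleGraph.Walk.isPath_def R).mp hRpath) ?_
    intro z hz1 hz2
    exact hPX z hz1 (hRsubX z hz2)
  have hxuTw : s(x, u'.val) ∉ Tw.edges := by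
    rw [hTw, SimpleGraph.Walk.edges_append, SimpleGraph.Walk.edges_cons]
    intro hmem
    rcases List.mem_append.mp hmem with h5 | h5
    · exact hPX x (SimpleGraph.Walk.fst_mem_support_of_mem_edges P h5) hxX
    · rcases List.mem_cons.mp h5 with h6 | h6
      · rw [Sym2.eq_iff] at h6
        rcases h6 with ⟨h7, h8⟩ | ⟨h7, h8⟩
        · exact w'.2 (h7 ▸ hxX)
        · exact huwval h8
      · exact u'.2 (hRsubX u'.val (SimpleGraph.Walk.snd_mem_support_of_mem_edges R h6))
  set C2 : G.Walk x x := SimpleGraph.Walk.cons (hux.symm) Tw with hC2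
  have hC2cyc : C2.IsCycle :=
    (SimpleGraph.Walk.cons_isCycle_iff Tw (hux.symm)).mpr ⟨hTwpath, hxuTw⟩
  have hC2even : Even C2.length := by
    rw [hC2, SimpleGraph.Walk.length_cons, hTw, SimpleGraph.Walk.length_append,
      SimpleGraph.Walk.length_cons]
    rcases hPeven with ⟨k1, hk1⟩
    rcases hReven with ⟨k2, hk2⟩
    exact ⟨k1 + k2 + 1, by omega⟩
  -- delete the cycle
  have hPM2 := hcc.2 x C2 hC2cyc hC2even
  obtain ⟨qq, hqq⟩ := (hasPM_delVerts_iff _).mp hPM2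
  set S₂ : Set V := {z : V | z ∈ C2.support} with hS₂
  -- support structure
  set LP : List V := P.support.tail with hLP
  set LR : List V := (R.reverse.support.tail).reverse with hLR
  have hPsupeq : P.support = u'.val :: LP := SimpleGraph.Walk.support_eq_cons P
  have hRsupeq : R.support = LR ++ [x] := by
    have h5 : R.reverse.support = x :: R.reverse.support.tail :=
      SimpleGraph.Walk.support_eq_cons R.reverse
    have h6 : R.support.reverse = x :: R.reverse.support.tail := by
      rw [← SimpleGraph.Walk.support_reverse]; exact h5
    have h7 : R.support = (x :: R.reverse.support.tail).reverse := by
      rw [← h6, List.reverse_reverse]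
    rw [h7, List.reverse_cons, hLR]
  -- facts about LP
  have hPnd : P.support.Nodup := (SimpleGraph.Walk.isPath_def P).mp hPpath
  have hLPnd : LP.Nodup := by
    rw [hPsupeq] at hPnd
    exact (List.nodup_cons.mp hPnd).2
  have huLP : u'.val ∉ LP := by
    rw [hPsupeq] at hPnd
    exact (List.nodup_cons.mp hPnd).1
  have hLPX : ∀ z ∈ LP, z ∉ X := by
    intro z hz
    exact hPX z (by rw [hPsupeq]; exact List.mem_cons_of_mem _ hz)
  have hLPeven : Even LP.length := by
    have h5 : P.support.length = P.length + 1 := SimpleGraph.Walk.length_support P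
    have h6 : LP.length = P.length := by
      rw [hLP, List.length_tail, h5]
      omega
    rw [h6]; exact hPeven
  have hLPch : LP.Chain' G.Adj := (SimpleGraph.Walk.isChain_adj_support P).tail
  -- facts about LR
  have hRnd : R.support.Nodup := (SimpleGraph.Walk.isPath_def R).mp hRpath
  have hLRnd : LR.Nodup := by
    rw [hRsupeq] at hRnd
    exact (List.nodup_append'.mp hRnd).1
  have hxLR : x ∉ LR := by
    rw [hRsupeq] at hRnd
    intro hc
    exact (List.nodup_append'.mp hRnd).2.2 hc (by simp)
  have hLRX : ∀ z ∈ LR, z ∈ X := by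
    intro z hz
    exact hRsubX z (by rw [hRsupeq]; exact List.mem_append_left _ hz)
  have hLReven : Even LR.length := by
    have h5 : R.support.length = R.length + 1 := SimpleGraph.Walk.length_support R
    have h6 : LR.length = R.length := by
      have := congrArg List.length hRsupeq
      simp only [List.length_append, List.length_cons, List.length_nil] at this
      omega
    rw [h6]; exact hReven
  have hLRch : LR.Chain' G.Adj := by
    have h5 := SimpleGraph.Walk.isChain_adj_support R
    rw [hRsupeq] at h5
    exact h5.left_of_append
  -- S₂ membership
  have hS₂iff : ∀ z, z ∈ S₂ ↔ z = x ∨ z = u'.val ∨ z ∈ LP ∨ z ∈ LR := by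
    intro z
    rw [hS₂, Set.mem_setOf_eq, hC2, SimpleGraph.Walk.support_cons, hTwsup]
    constructor
    · intro hz
      rcases List.mem_cons.mp hz with rfl | hz'
      · exact Or.inl rfl
      rcases List.mem_append.mp hz' with h5 | h5
      · rw [hPsupeq] at h5
        rcases List.mem_cons.mp h5 with rfl | h6
        · exact Or.inr (Or.inl rfl)
        · exact Or.inr (Or.inr (Or.inl h6))
      · rw [hRsupeq] at h5
        rcases List.mem_append.mp h5 with h6 | h6
        · exact Or.inr (Or.inr (Or.inr h6))
        · exact Or.inl (by simpa using h6)
    · intro hz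
      rcases hz with rfl | rfl | hz' | hz'
      · exact List.mem_cons_self
      · exact List.mem_cons_of_mem _ (List.mem_append_left _ (by rw [hPsupeq]; simp))
      · exact List.mem_cons_of_mem _ (List.mem_append_left _
          (by rw [hPsupeq]; exact List.mem_cons_of_mem _ hz'))
      · exact List.mem_cons_of_mem _ (List.mem_append_right _
          (by rw [hRsupeq]; exact List.mem_append_left _ hz'))
  have hxu : x ≠ u'.val := fun h => u'.2 (h ▸ hxX)
  have hxLP : x ∉ LP := fun h => hLPX x h hxX
  have huLR : u'.val ∉ LR := fun h => u'.2 (hLRX _ h)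
  have hp2spec := listPair_spec G LP hLPnd hLPeven hLPch
  have hp3spec := listPair_spec G LR hLRnd hLReven hLRch
  -- the pairing on S₂
  set p₂ : V → V := fun z => if z = x then u'.val else if z = u'.val then x
      else if z ∈ LP then listPair LP z else listPair LR z with hp₂
  have hp₂x : p₂ x = u'.val := by rw [hp₂]; simp
  have hp₂u : p₂ u'.val = x := by rw [hp₂]; simp [Ne.symm hxu]
  have hp₂LP : ∀ z ∈ LP, p₂ z = listPair LP z := by
    intro z hz
    rw [hp₂]
    have h5 : z ≠ x := fun h => hxLP (h ▸ hz)
    have h6 : z ≠ u'.val := fun h => huLP (h ▸ hz)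
    simp [h5, h6, hz]
  have hp₂LR : ∀ z ∈ LR, p₂ z = listPair LR z := by
    intro z hz
    rw [hp₂]
    have h5 : z ≠ x := fun h => hxLR (h ▸ hz)
    have h6 : z ≠ u'.val := fun h => huLR (h ▸ hz)
    have h7 : z ∉ LP := fun h => hLPX z h (hLRX z hz)
    simp [h5, h6, h7]
  have hp₂pair : IsPairingOn G S₂ p₂ := by
    intro z hz
    rcases (hS₂iff z).mp hz with rfl | rfl | hz' | hz'
    · rw [hp₂x]
      refine ⟨(hS₂iff _).mpr (Or.inr (Or.inl rfl)), Ne.symm hxu, ?_, ?_⟩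
      · rw [hp₂u]
      · exact hux.symm
    · rw [hp₂u]
      refine ⟨(hS₂iff _).mpr (Or.inl rfl), hxu, ?_, ?_⟩
      · rw [hp₂x]
      · exact hux
    · obtain ⟨hm, hne, hinv, hadj⟩ := hp2spec z hz'
      rw [hp₂LP z hz']
      refine ⟨(hS₂iff _).mpr (Or.inr (Or.inr (Or.inl hm))), hne, ?_, hadj⟩
      rw [hp₂LP _ hm, hinv]
    · obtain ⟨hm, hne, hinv, hadj⟩ := hp3spec z hz'
      rw [hp₂LR z hz']
      refine ⟨(hS₂iff _).mpr (Or.inr (Or.inr (Or.inr hm))), hne, ?_, hadj⟩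
      rw [hp₂LR _ hm, hinv]
  -- combine with qq
  set F : V → V := fun z => if z ∈ S₂ then p₂ z else qq z with hF
  have hFeq : ∀ z, z ∈ S₂ → F z = p₂ z := fun z hz => by rw [hF]; simp [hz]
  have hFeq' : ∀ z, z ∉ S₂ → F z = qq z := fun z hz => by rw [hF]; simp [hz]
  have hFpair : IsPairingOn G Set.univ F := by
    rintro v -
    by_cases hv : v ∈ S₂
    · obtain ⟨hm, hne, hinv, hadj⟩ := hp₂pair v hv
      refine ⟨Set.mem_univ _, ?_, ?_, ?_⟩
      · rw [hFeq v hv]; exact hne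
      · rw [hFeq v hv, hFeq _ hm, hinv]
      · rw [hFeq v hv]; exact hadj
    · obtain ⟨hm, hne, hinv, hadj⟩ := hqq v hv
      refine ⟨Set.mem_univ _, ?_, ?_, ?_⟩
      · rw [hFeq' v hv]; exact hne
      · rw [hFeq' v hv, hFeq' _ hm, hinv]
      · rw [hFeq' v hv]; exact hadj
  obtain ⟨b, hbX, hFbX, hFuniq⟩ := cross_unique ht hFpair
  have huS₂ : u'.val ∈ S₂ := (hS₂iff _).mpr (Or.inr (Or.inl rfl))
  have hbu : b = u'.val := by
    refine (hFuniq u'.val u'.2 ?_).symm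
    rw [hFeq _ huS₂, hp₂u]
    exact hxX
  have hqquniq : ∀ z, z ∉ S₂ → z ∉ X → qq z ∉ X := by
    intro z h1 h2 hc
    have h5 : z = b := hFuniq z h2 (by rwa [hFeq' z h1])
    rw [hbu] at h5
    exact h1 (h5 ▸ huS₂)
  -- membership translation between c.support and S₂
  have hmemiff : ∀ (w : {v : V // v ∉ X}),
      (Sum.inl w : {v : V // v ∉ X} ⊕ Unit) ∈ c.support ↔ w.val ∈ P.support := by
    intro w
    rw [hsupiff]
    constructor
    · rintro (h5 | h5)
      · exact absurd h5 (by simp)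
      · rw [hPsup]
        exact List.mem_map.mpr ⟨Sum.inl w, h5, rfl⟩
    · intro h5
      rw [hPsup] at h5
      obtain ⟨z', hz', heq⟩ := List.mem_map.mp h5
      obtain ⟨w1, rfl⟩ := eq_inl_of_ne_inr (hqsub z' hz')
      simp only [sval_inl] at heq
      exact Or.inr (by rwa [← Subtype.ext heq])
  have hPsubS₂ : ∀ z ∈ P.support, z ∈ S₂ := by
    intro z hz
    rw [hPsupeq] at hz
    rcases List.mem_cons.mp hz with rfl | hz'
    · exact huS₂
    · exact (hS₂iff _).mpr (Or.inr (Or.inr (Or.inl hz')))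
  -- final pairing
  refine (hasPM_delVerts_iff _).mpr
    ⟨fun z => match z with
      | Sum.inr _ => Sum.inr ()
      | Sum.inl w => if h2 : qq w.val ∉ X then Sum.inl ⟨qq w.val, h2⟩ else z, ?_⟩
  rintro (w | u) hz
  · -- z = inl w
    have hwP : w.val ∉ P.support := fun hc => hz ((hmemiff w).mpr hc)
    have hwS₂ : w.val ∉ S₂ := by
      intro hc
      rcases (hS₂iff _).mp hc with h5 | h5 | h5 | h5
      · exact w.2 (h5 ▸ hxX)
      · exact hwP (by rw [h5, hPsupeq]; simp)
      · exact hwP (by rw [hPsupeq]; exact List.mem_cons_of_mem _ h5)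
      · exact w.2 (hLRX _ h5)
    obtain ⟨hqwS, hqwne, hqwinv, hqwadj⟩ := hqq w.val hwS₂
    have hqwX : qq w.val ∉ X := hqquniq w.val hwS₂ w.2
    simp only [dif_pos hqwX]
    refine ⟨?_, ?_, ?_, ?_⟩
    · intro hc
      have := (hmemiff ⟨qq w.val, hqwX⟩).mp hc
      exact hqwS (hPsubS₂ _ this)
    · intro hc
      injection hc with hc'
      exact hqwne (congrArg Subtype.val hc')
    · have h5 : qq (qq w.val) ∉ X := by rw [hqwinv]; exact w.2
      simp only [dif_pos h5]
      exact congrArg Sum.inl (Subtype.ext hqwinv)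
    · rw [contract_adj_inl_inl]
      refine ⟨?_, hqwadj⟩
      intro hc
      exact hqwne (congrArg Subtype.val hc).symm
  · -- z = inr u : impossible, inr is on the cycle
    exfalso
    exact hz (SimpleGraph.Walk.start_mem_support c)

lemma contract_cycleConformal {G : SimpleGraph V} {X : Set V}
    (hmc : matchingCovered G) (ht : tightCut G X) (hcc : cycleConformal G) :
    cycleConformal (contractSet G X) := by
  classical
  have hcard := hmc.1
  have hposf := Nat.card_pos_iff.mp (show 0 < Nat.card V by omega)
  have hfin : Finite V := hposf.2
  obtain ⟨vj⟩ := hposf.1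
  constructor
  · exact contract_hasPM ht hcc.1
  · intro v c hcyc heven
    rcases Classical.em ((Sum.inr () : {v : V // v ∉ X} ⊕ Unit) ∈ c.support) with hinr | hinr
    · set C' := c.rotate _ hinr with hC'
      have hcyc' : C'.IsCycle := hcyc.rotate hinr
      have hrotlen : C'.length = c.length := rotate_length c hinr
      have heven' : Even C'.length := by rw [hrotlen]; exact heven
      have hPM := contract_cc_case2 hmc ht hcc vj C' hcyc' heven'
      have hlen0 : c.length ≠ 0 := by have := hcyc.three_le_length; omega
      have hlen0' : C'.length ≠ 0 := by rw [hrotlen]; omega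
      have hmem : ∀ z, z ∈ c.support ↔ z ∈ C'.support := by
        intro z
        rw [mem_support_iff_mem_tail c hlen0 z, mem_support_iff_mem_tail C' hlen0' z]
        exact ((SimpleGraph.Walk.support_rotate c _ hinr).mem_iff).symm
      have hseteq : {z : {v : V // v ∉ X} ⊕ Unit | z ∈ c.support} =
          {z | z ∈ C'.support} := Set.ext (fun z => hmem z)
      rw [hseteq]
      exact hPM
    · have hv : v ≠ Sum.inr () := fun hc => hinr (hc ▸ SimpleGraph.Walk.start_mem_support c)
      obtain ⟨v₀', rfl⟩ := eq_inl_of_ne_inr hv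
      exact contract_cc_case1 ht hcc vj v₀' c hcyc heven hinr

lemma cutSet_compl {G : SimpleGraph V} {X : Set V} : cutSet G Xᶜ = cutSet G X := by
  ext e
  constructor
  · rintro ⟨a, b, rfl, hadj, ha, hb⟩
    exact ⟨b, a, Sym2.eq_swap.symm, hadj.symm, not_not.mp hb, ha⟩
  · rintro ⟨a, b, rfl, hadj, ha, hb⟩
    exact ⟨b, a, Sym2.eq_swap.symm, hadj.symm, hb, not_not_intro ha⟩

lemma tight_compl {G : SimpleGraph V} {X : Set V} (ht : tightCut G X) :
    tightCut G Xᶜ := by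
  intro M hM
  have h := ht M hM
  rwa [show cutSet G X = cutSet G Xᶜ from cutSet_compl.symm] at h

end TCC

/-- If a matching covered graph with a tight cut is cycle-conformal, then so
are both of its tight cut contractions. -/
theorem tightCut_contractions_cycleConformal {V : Type*} (G : SimpleGraph V)
    (X : Set V) (hmc : matchingCovered G) (ht : tightCut G X)
    (hcc : cycleConformal G) :
    cycleConformal (contractSet G X) ∧ cycleConformal (contractSet G Xᶜ) := by
  exact ⟨TCC.contract_cycleConformal hmc ht hcc,
    TCC.contract_cycleConformal hmc (TCC.tight_compl ht) hcc⟩
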